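/- If (𝔤, b) is an orthogonal Lie algebra with a contact form η, and x̄ ∈ 𝔤 is the element with b(x̄, ·) = η, then ker(ad_{x̄}) = ℝ x̄ is one-dimensional and 𝔤 = ker(ad_{x̄}) ⊕ Im(ad_{x̄}) as a vector space direct sum, with Im(ad_{x̄}) = ker(η) equal to the b-orthogonal of ℝ x̄. -/

import Mathlib

open Module

/-- `η` is a contact form on the odd-dimensional real Lie algebra `L`: equivalently to the
condition `(∂η)^n ∧ η ≠ 0` (with `dim L = 2n+1`, `∂η (x,y) = -η ⁅x,y⁆`), `η ≠ 0` and the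
2-form `∂η` is nondegenerate on the kernel of `η`. -/
def IsContactForm {L : Type*} [LieRing L] [LieAlgebra ℝ L] (η : Module.Dual ℝ L) : Prop :=
  η ≠ 0 ∧ ∀ x : L, η x = 0 → (∀ y : L, η y = 0 → η ⁅x, y⁆ = 0) → x = 0

/-- `α` is an exact symplectic form on the even-dimensional real Lie algebra `L`:
equivalently to `(∂α)^m ≠ 0` (with `dim L = 2m`), the 2-form `∂α (x,y) = -α ⁅x,y⁆`
is nondegenerate. -/
def IsExactSymplecticForm {L : Type*} [LieRing L] [LieAlgebra ℝ L] (α : Module.Dual ℝ L) : Prop :=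
  ∀ x : L, (∀ y : L, α ⁅x, y⁆ = 0) → x = 0

/-- In an orthogonal Lie algebra with contact form `η = b(xb, ·)`, one has
`ker (ad xb) = ℝ xb`, `𝔤 = ker (ad xb) ⊕ Im (ad xb)` and
`Im (ad xb) = ker η` equals the `b`-orthogonal of `ℝ xb`. -/
theorem orthogonal_contact_ad_decomposition {L : Type*} [LieRing L] [LieAlgebra ℝ L]
    [FiniteDimensional ℝ L] (n : ℕ) (hdim : finrank ℝ L = 2 * n + 1)
    (b : LinearMap.BilinForm ℝ L)
    (hsym : ∀ x y : L, b x y = b y x)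
    (hnd : ∀ x : L, (∀ y : L, b x y = 0) → x = 0)
    (hinv : ∀ x y z : L, b ⁅x, y⁆ z + b y ⁅x, z⁆ = 0)
    (η : Module.Dual ℝ L) (hη : IsContactForm η)
    (xb : L) (hxb : ∀ y : L, b xb y = η y) :
    xb ≠ 0 ∧
    LinearMap.ker ((LieAlgebra.ad ℝ L xb) : L →ₗ[ℝ] L) = Submodule.span ℝ {xb} ∧
    IsCompl (LinearMap.ker ((LieAlgebra.ad ℝ L xb) : L →ₗ[ℝ] L))
      (LinearMap.range ((LieAlgebra.ad ℝ L xb) : L →ₗ[ℝ] L)) ∧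
    LinearMap.range ((LieAlgebra.ad ℝ L xb) : L →ₗ[ℝ] L) = LinearMap.ker η ∧
    LinearMap.ker η = b.orthogonal (Submodule.span ℝ {xb}) := by

  obtain ⟨hη0, hcontact⟩ := hη
  -- η vanishes on the image of ad xb
  have hker : ∀ x : L, η ⁅xb, x⁆ = 0 := by
    intro x
    have h := hinv xb xb x
    rw [lie_self] at h
    simp only [map_zero, LinearMap.zero_apply, zero_add] at h
    rw [hxb] at h
    exact h
  -- key identity: η ⁅x, y⁆ = b ⁅xb, x⁆ y
  have key : ∀ x y : L, η ⁅x, y⁆ = b ⁅xb, x⁆ y := by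
    intro x y
    have h := hinv x xb y
    rw [hxb] at h
    have : b ⁅x, xb⁆ y = - b ⁅xb, x⁆ y := by
      rw [← lie_skew x xb, map_neg, LinearMap.neg_apply]
    linarith [h, this]
  -- η xb ≠ 0
  have hηxb : η xb ≠ 0 := by
    intro h0
    apply hη0
    have hx0 : xb = 0 := hcontact xb h0 (fun y _ => hker y)
    ext y
    rw [← hxb y, hx0]
    simp
  have hxbne : xb ≠ 0 := by
    intro h
    apply hηxb
    rw [h, map_zero]
  -- ker (ad xb) = span {xb}
  have hkereq : LinearMap.ker ((LieAlgebra.ad ℝ L xb) : L →ₗ[ℝ] L)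
      = Submodule.span ℝ {xb} := by
    apply le_antisymm
    · intro x hx
      have hx0 : ⁅xb, x⁆ = 0 := by
        simpa [LieAlgebra.ad_apply] using (LinearMap.mem_ker.mp hx)
      have hall : ∀ y : L, η ⁅x, y⁆ = 0 := by
        intro y; rw [key, hx0]; simp
      set c := η x / η xb with hc
      have h1 : η (x - c • xb) = 0 := by
        rw [map_sub, map_smul, hc, smul_eq_mul]
        field_simp
        simp
      have h2 : x - c • xb = 0 := by
        apply hcontact _ h1
        intro y _
        rw [sub_lie, smul_lie, map_sub, map_smul, hall, hker]
        simp
      have : x = c • xb := by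
        rw [sub_eq_zero] at h2; exact h2
      rw [this]
      exact Submodule.smul_mem _ c (Submodule.mem_span_singleton_self xb)
    · rw [Submodule.span_le]
      intro z hz
      rw [Set.mem_singleton_iff] at hz
      subst hz
      simp [LinearMap.mem_ker, LieAlgebra.ad_apply]
  have hfrk : finrank ℝ (LinearMap.ker ((LieAlgebra.ad ℝ L xb) : L →ₗ[ℝ] L)) = 1 := by
    rw [hkereq, finrank_span_singleton hxbne]
  have hfrr : finrank ℝ (LinearMap.range ((LieAlgebra.ad ℝ L xb) : L →ₗ[ℝ] L)) = 2 * n := by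
    have h := LinearMap.finrank_range_add_finrank_ker ((LieAlgebra.ad ℝ L xb) : L →ₗ[ℝ] L)
    rw [hfrk, hdim] at h
    omega
  have hfrη : finrank ℝ (LinearMap.ker η) = 2 * n := by
    have h := LinearMap.finrank_range_add_finrank_ker η
    have hr : finrank ℝ (LinearMap.range η) = 1 := by
      have : LinearMap.range η = ⊤ := by
        rw [LinearMap.range_eq_top]
        intro z
        exact ⟨(z / η xb) • xb, by rw [map_smul, smul_eq_mul]; field_simp⟩
      rw [this]
      simp [finrank_top]
    rw [hr, hdim] at h
    omega
  have hrange : LinearMap.range ((LieAlgebra.ad ℝ L xb) : L →ₗ[ℝ] L) = LinearMap.ker η := by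
    apply Submodule.eq_of_le_of_finrank_eq
    · rintro _ ⟨y, rfl⟩
      simpa [LieAlgebra.ad_apply] using hker y
    · rw [hfrr, hfrη]
  have hdisj : Disjoint (LinearMap.ker ((LieAlgebra.ad ℝ L xb) : L →ₗ[ℝ] L))
      (LinearMap.range ((LieAlgebra.ad ℝ L xb) : L →ₗ[ℝ] L)) := by
    rw [Submodule.disjoint_def]
    intro x hx1 hx2
    rw [hkereq, Submodule.mem_span_singleton] at hx1
    obtain ⟨c, rfl⟩ := hx1
    rw [hrange, LinearMap.mem_ker, map_smul, smul_eq_mul] at hx2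
    rcases mul_eq_zero.mp hx2 with h | h
    · rw [h, zero_smul]
    · exact absurd h hηxb
  have hcompl : IsCompl (LinearMap.ker ((LieAlgebra.ad ℝ L xb) : L →ₗ[ℝ] L))
      (LinearMap.range ((LieAlgebra.ad ℝ L xb) : L →ₗ[ℝ] L)) := by
    refine ⟨hdisj, ?_⟩
    rw [codisjoint_iff]
    apply Submodule.eq_top_of_finrank_eq
    have h := Submodule.finrank_sup_add_finrank_inf_eq
      (LinearMap.ker ((LieAlgebra.ad ℝ L xb) : L →ₗ[ℝ] L))
      (LinearMap.range ((LieAlgebra.ad ℝ L xb) : L →ₗ[ℝ] L))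
    rw [disjoint_iff.mp hdisj] at h
    simp only [finrank_bot, add_zero] at h
    rw [h, hfrk, hfrr, hdim]
    omega
  have horth : LinearMap.ker η = b.orthogonal (Submodule.span ℝ {xb}) := by
    ext x
    rw [LinearMap.mem_ker, LinearMap.BilinForm.mem_orthogonal_iff]
    constructor
    · intro hx z hz
      rw [Submodule.mem_span_singleton] at hz
      obtain ⟨c, rfl⟩ := hz
      show b (c • xb) x = 0
      rw [map_smul]
      simp [hxb x, hx]
    · intro h
      have := h xb (Submodule.mem_span_singleton_self xb)
      rw [← hxb x]
      exact this
  exact ⟨hxbne, hkereq, hcompl, hrange, horth⟩
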